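/- If R : ℝ^N → [0,∞) satisfies R(z) = R(|z|) for all z (where |z| is the componentwise absolute value), is separable (R(z) = Σ_j r_j(z_j) for functions r_j : ℝ → [0,∞)), and is concave on the nonnegative orthant, then R is subadditive on ℝ^N: R(z + z') ≤ R(z) + R(z') for all z, z' ∈ ℝ^N. -/

import Mathlib

/-- A separable, componentwise-even penalty that is concave on the nonnegative
orthant is subadditive on all of `ℝ^N`. -/
theorem separable_concave_subadditive (N : ℕ) (R : (Fin N → ℝ) → ℝ)
    (r : Fin N → ℝ → ℝ)
    (hRnonneg : ∀ z : Fin N → ℝ, 0 ≤ R z)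
    (hrnonneg : ∀ j t, 0 ≤ r j t)
    (habs : ∀ z : Fin N → ℝ, R z = R (fun j => |z j|))
    (hsep : ∀ z : Fin N → ℝ, R z = ∑ j, r j (z j))
    (hconc : ∀ z z' : Fin N → ℝ, (∀ j, 0 ≤ z j) → (∀ j, 0 ≤ z' j) →
      ∀ l : ℝ, 0 ≤ l → l ≤ 1 →
      l * R z + (1 - l) * R z' ≤ R (fun j => l * z j + (1 - l) * z' j)) :
    ∀ z z' : Fin N → ℝ, R (z + z') ≤ R z + R z' := by
  -- one-dimensional concavity of each `r j`
  have key : ∀ (j : Fin N) (a b l : ℝ), 0 ≤ a → 0 ≤ b → 0 ≤ l → l ≤ 1 →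
      l * r j a + (1 - l) * r j b ≤ r j (l * a + (1 - l) * b) := by
    intro j a b l ha hb hl hl1
    have S : ∀ x : ℝ, (∑ k, r k (if k = j then x else 0))
        = r j x + ∑ k ∈ Finset.univ.erase j, r k 0 := by
      intro x
      rw [← Finset.sum_erase_add _ _ (Finset.mem_univ j), if_pos rfl, add_comm]
      congr 1
      exact Finset.sum_congr rfl (fun k hk => by
        rw [if_neg (Finset.ne_of_mem_erase hk)])
    have h := hconc (fun k => if k = j then a else 0) (fun k => if k = j then b else 0)
      (fun k => by split_ifs <;> simp [ha])
      (fun k => by split_ifs <;> simp [hb]) l hl hl1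
    rw [hsep, hsep, hsep] at h
    have e : ∀ k : Fin N, r k (l * (if k = j then a else 0) + (1 - l) * (if k = j then b else 0))
        = r k (if k = j then l * a + (1 - l) * b else 0) := by
      intro k; split_ifs <;> ring_nf
    simp only [e] at h
    rw [S, S, S] at h
    linarith
  -- monotonicity of each `r j` on the nonnegative half-line
  have mono : ∀ (j : Fin N) (a b : ℝ), 0 ≤ a → a ≤ b → r j a ≤ r j b := by
    intro j a b ha hab
    rcases eq_or_lt_of_le hab with rfl | hlt
    · exact le_refl _
    · apply le_of_forall_pos_le_add
      intro ε hε
      have hfa : 0 ≤ r j a := hrnonneg j a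
      set l := min 1 (ε / (r j a + 1)) with hldef
      have hl0 : 0 < l := lt_min one_pos (div_pos hε (by linarith))
      have hl1 : l ≤ 1 := min_le_left _ _
      have hc0 : 0 ≤ a + (b - a) / l := by
        have := div_nonneg (by linarith : (0:ℝ) ≤ b - a) hl0.le
        linarith
      have h := key j (a + (b - a) / l) a l hc0 ha hl0.le hl1
      have harg : l * (a + (b - a) / l) + (1 - l) * a = b := by
        field_simp
        ring
      rw [harg] at h
      have hfc : 0 ≤ r j (a + (b - a) / l) := hrnonneg _ _
      have hlfa : l * r j a ≤ ε := by
        have h1 : l * r j a ≤ (ε / (r j a + 1)) * r j a :=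
          mul_le_mul_of_nonneg_right (min_le_right _ _) hfa
        have h2 : (ε / (r j a + 1)) * r j a ≤ (ε / (r j a + 1)) * (r j a + 1) :=
          mul_le_mul_of_nonneg_left (by linarith) (le_of_lt (div_pos hε (by linarith)))
        have h3 : (ε / (r j a + 1)) * (r j a + 1) = ε := by
          field_simp
        linarith
      nlinarith [mul_nonneg hl0.le hfc]
  -- subadditivity of each `r j` on the nonnegative half-line
  have subadd : ∀ (j : Fin N) (a b : ℝ), 0 ≤ a → 0 ≤ b →
      r j (a + b) ≤ r j a + r j b := by
    intro j a b ha hb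
    rcases eq_or_lt_of_le (by linarith : (0:ℝ) ≤ a + b) with hs | hs
    · have ha0 : a = 0 := by linarith
      have hb0 : b = 0 := by linarith
      subst ha0; subst hb0
      simpa using hrnonneg j 0
    · have h1 := key j (a + b) 0 (a / (a + b)) (by linarith) le_rfl
        (div_nonneg ha hs.le) (by rw [div_le_one hs]; linarith)
      have h2 := key j (a + b) 0 (b / (a + b)) (by linarith) le_rfl
        (div_nonneg hb hs.le) (by rw [div_le_one hs]; linarith)
      have e1 : a / (a + b) * (a + b) + (1 - a / (a + b)) * 0 = a := by
        field_simp
        ring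
      have e2 : b / (a + b) * (a + b) + (1 - b / (a + b)) * 0 = b := by
        field_simp
        ring
      rw [e1] at h1
      rw [e2] at h2
      have hd : a / (a + b) + b / (a + b) = 1 := by field_simp
      have hf0 : 0 ≤ r j 0 := hrnonneg j 0
      have hab1 : 1 - a / (a + b) ≥ 0 := by
        have : a / (a + b) ≤ 1 := by rw [div_le_one hs]; linarith
        linarith
      have hab2 : 1 - b / (a + b) ≥ 0 := by
        have : b / (a + b) ≤ 1 := by rw [div_le_one hs]; linarith
        linarith
      have key2 : (a / (a + b) + b / (a + b)) * r j (a + b) = r j (a + b) := by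
        rw [hd, one_mul]
      have e3 : (a / (a + b) + b / (a + b)) * r j (a + b)
          = a / (a + b) * r j (a + b) + b / (a + b) * r j (a + b) := by ring
      linarith [mul_nonneg hab1 hf0, mul_nonneg hab2 hf0]
  -- conclusion
  intro z z'
  calc R (z + z') = R (fun j => |(z + z') j|) := habs _
    _ = ∑ j, r j (|z j + z' j|) := by rw [hsep]; simp [Pi.add_apply]
    _ ≤ ∑ j, (r j (|z j|) + r j (|z' j|)) := by
        apply Finset.sum_le_sum
        intro j _
        calc r j (|z j + z' j|) ≤ r j (|z j| + |z' j|) :=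
              mono j _ _ (abs_nonneg _) (abs_add_le _ _)
          _ ≤ r j (|z j|) + r j (|z' j|) := subadd j _ _ (abs_nonneg _) (abs_nonneg _)
    _ = (∑ j, r j (|z j|)) + ∑ j, r j (|z' j|) := Finset.sum_add_distrib
    _ = R z + R z' := by rw [habs z, habs z', hsep, hsep]
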